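/- Let (Ω, K, P) be a probability space and A, B two sub-σ-algebras of K. Define ψ'(A,B) = inf { P(A∩B)/(P(A)P(B)) : A ∈ A, B ∈ B, P(A)P(B) > 0 } and ρ(A,B) = sup { |corr(X,Y)| : X ∈ L²(A), Y ∈ L²(B) }. Then ρ(A,B) ≤ 1 - ψ'(A,B). -/

import Mathlib

open MeasureTheory Filter Topology
open scoped ENNReal

section Aux


variable {Ω : Type*}

noncomputable def srange {𝒜 : MeasurableSpace Ω} (u : @SimpleFunc Ω 𝒜 ℝ) : Finset ℝ := u.range

lemma mem_srange_self {𝒜 : MeasurableSpace Ω} (u : @SimpleFunc Ω 𝒜 ℝ) (ω : Ω) :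
    u ω ∈ srange u := u.mem_range_self ω

variable {m : MeasurableSpace Ω}

lemma part_meas {ℬ : MeasurableSpace Ω} (P : @Measure Ω m) (hℬ : ℬ ≤ m)
    (v : @SimpleFunc Ω ℬ ℝ) {C : Set Ω} (hC : MeasurableSet[m] C) :
    ∑ j ∈ srange v, P (C ∩ v ⁻¹' {j}) = P C := by
  rw [← measure_biUnion_finset]
  · congr 1
    ext ω
    simp only [Set.mem_iUnion, Set.mem_inter_iff, Set.mem_preimage, Set.mem_singleton_iff]
    constructor
    · rintro ⟨j, _, hω, _⟩; exact hω
    · intro hω; exact ⟨v ω, mem_srange_self v ω, hω, rfl⟩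
  · intro i _ j _ hij
    apply Set.disjoint_left.2
    rintro ω ⟨_, hi⟩ ⟨_, hj⟩
    exact hij ((Set.mem_singleton_iff.1 hi).symm.trans (Set.mem_singleton_iff.1 hj))
  · exact fun j _ => hC.inter (hℬ _ (v.measurableSet_fiber j))

lemma part_meas_toReal {ℬ : MeasurableSpace Ω} (P : @Measure Ω m) [IsFiniteMeasure P] (hℬ : ℬ ≤ m)
    (v : @SimpleFunc Ω ℬ ℝ) {C : Set Ω} (hC : MeasurableSet[m] C) :
    ∑ j ∈ srange v, (P (C ∩ v ⁻¹' {j})).toReal = (P C).toReal := by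
  rw [← part_meas P hℬ v hC, ENNReal.toReal_sum]
  exact fun j _ => measure_ne_top P _

lemma indicator_integrable (P : @Measure Ω m) [IsFiniteMeasure P] {s : Set Ω}
    (hs : MeasurableSet[m] s) (e : ℝ) :
    Integrable (Set.indicator s (fun _ => e)) P :=
  (integrable_const _).indicator hs

lemma indicator_integral (P : @Measure Ω m) {s : Set Ω}
    (hs : MeasurableSet[m] s) (e : ℝ) :
    ∫ ω, Set.indicator s (fun _ => e) ω ∂P = e * (P s).toReal := by
  rw [integral_indicator_const _ hs, smul_eq_mul, mul_comm]
  rfl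

lemma integral_pair_eq_sum {𝒜 ℬ : MeasurableSpace Ω} (P : @Measure Ω m) [IsProbabilityMeasure P]
    (h𝒜 : 𝒜 ≤ m) (hℬ : ℬ ≤ m) (u : @SimpleFunc Ω 𝒜 ℝ) (v : @SimpleFunc Ω ℬ ℝ)
    (φ : ℝ → ℝ → ℝ) :
    ∫ ω, φ (u ω) (v ω) ∂P
      = ∑ p ∈ srange u ×ˢ srange v, φ p.1 p.2 * (P (u ⁻¹' {p.1} ∩ v ⁻¹' {p.2})).toReal := by
  have hmeas : ∀ p : ℝ × ℝ, MeasurableSet[m] (u ⁻¹' {p.1} ∩ v ⁻¹' {p.2}) :=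
    fun p => (h𝒜 _ (@SimpleFunc.measurableSet_fiber Ω ℝ 𝒜 u p.1)).inter (hℬ _ (@SimpleFunc.measurableSet_fiber Ω ℝ ℬ v p.2))
  have hfun : ∀ ω, φ (u ω) (v ω)
      = ∑ p ∈ srange u ×ˢ srange v,
          Set.indicator (u ⁻¹' {p.1} ∩ v ⁻¹' {p.2}) (fun _ => φ p.1 p.2) ω := by
    intro ω
    rw [Finset.sum_eq_single_of_mem (u ω, v ω)
        (Finset.mem_product.2 ⟨mem_srange_self u ω, mem_srange_self v ω⟩)]
    · rw [Set.indicator_of_mem]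
      exact ⟨rfl, rfl⟩
    · intro p _ hp
      rw [Set.indicator_of_notMem]
      rintro ⟨h1, h2⟩
      exact hp (by
        rcases p with ⟨p1, p2⟩
        simp only [Set.mem_preimage, Set.mem_singleton_iff] at h1 h2
        rw [← h1, ← h2])
  calc ∫ ω, φ (u ω) (v ω) ∂P
      = ∫ ω, ∑ p ∈ srange u ×ˢ srange v,
          Set.indicator (u ⁻¹' {p.1} ∩ v ⁻¹' {p.2}) (fun _ => φ p.1 p.2) ω ∂P := by
        exact integral_congr_ae (Filter.Eventually.of_forall hfun)
    _ = ∑ p ∈ srange u ×ˢ srange v,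
          ∫ ω, Set.indicator (u ⁻¹' {p.1} ∩ v ⁻¹' {p.2}) (fun _ => φ p.1 p.2) ω ∂P := by
        apply integral_finset_sum
        exact fun p _ => indicator_integrable P (hmeas p) _
    _ = ∑ p ∈ srange u ×ˢ srange v, φ p.1 p.2 * (P (u ⁻¹' {p.1} ∩ v ⁻¹' {p.2})).toReal := by
        refine Finset.sum_congr rfl fun p _ => ?_
        exact indicator_integral P (hmeas p) _

lemma key_simple {𝒜 ℬ : MeasurableSpace Ω} (P : @Measure Ω m) [IsProbabilityMeasure P]
    (h𝒜 : 𝒜 ≤ m) (hℬ : ℬ ≤ m) {c : ℝ}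
    (hmix : ∀ A B : Set Ω, MeasurableSet[𝒜] A → MeasurableSet[ℬ] B →
      c * ((P A).toReal * (P B).toReal) ≤ (P (A ∩ B)).toReal)
    (u : @SimpleFunc Ω 𝒜 ℝ) (v : @SimpleFunc Ω ℬ ℝ) :
    0 ≤ (1 - c) * ((∫ ω, u ω * u ω ∂P) + ∫ ω, v ω * v ω ∂P)
      + 2 * ((∫ ω, u ω * v ω ∂P) - c * (∫ ω, u ω ∂P) * (∫ ω, v ω ∂P)) := by
  classical
  set S := srange u with hS
  set T := srange v with hT
  set G := S ×ˢ T with hG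
  set mm : ℝ × ℝ → ℝ := fun p => (P (u ⁻¹' {p.1} ∩ v ⁻¹' {p.2})).toReal with hmm
  set pu : ℝ → ℝ := fun i => (P (u ⁻¹' {i})).toReal with hpu
  set pv : ℝ → ℝ := fun j => (P (v ⁻¹' {j})).toReal with hpv
  have hfibu : ∀ i, MeasurableSet[𝒜] (u ⁻¹' {i}) :=
    fun i => @SimpleFunc.measurableSet_fiber Ω ℝ 𝒜 u i
  have hfibv : ∀ j, MeasurableSet[ℬ] (v ⁻¹' {j}) :=
    fun j => @SimpleFunc.measurableSet_fiber Ω ℝ ℬ v j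
  -- marginal identities
  have hrow : ∀ i, ∑ j ∈ T, mm (i, j) = pu i := by
    intro i
    exact part_meas_toReal P hℬ v (h𝒜 _ (hfibu i))
  have hcol : ∀ j, ∑ i ∈ S, mm (i, j) = pv j := by
    intro j
    have := part_meas_toReal P h𝒜 u (C := v ⁻¹' {j}) (hℬ _ (hfibv j))
    calc ∑ i ∈ S, mm (i, j) = ∑ i ∈ S, (P (v ⁻¹' {j} ∩ u ⁻¹' {i})).toReal := by
          refine Finset.sum_congr rfl fun i _ => ?_
          rw [hmm]; rw [Set.inter_comm]
      _ = pv j := this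
  have hS1 : ∑ i ∈ S, pu i = 1 := by
    have := part_meas_toReal P h𝒜 u (C := Set.univ) MeasurableSet.univ
    simpa [Set.univ_inter] using this
  have hT1 : ∑ j ∈ T, pv j = 1 := by
    have := part_meas_toReal P hℬ v (C := Set.univ) MeasurableSet.univ
    simpa [Set.univ_inter] using this
  have hq : ∀ p ∈ G, c * (pu p.1 * pv p.2) ≤ mm p :=
    fun p _ => hmix _ _ (hfibu p.1) (hfibv p.2)
  -- the five integrals
  have h1 : (∫ ω, u ω * u ω ∂P) = ∑ p ∈ G, (p.1 * p.1) * mm p :=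
    integral_pair_eq_sum P h𝒜 hℬ u v (fun i j => i * i)
  have h2 : (∫ ω, v ω * v ω ∂P) = ∑ p ∈ G, (p.2 * p.2) * mm p :=
    integral_pair_eq_sum P h𝒜 hℬ u v (fun i j => j * j)
  have h3 : (∫ ω, u ω * v ω ∂P) = ∑ p ∈ G, (p.1 * p.2) * mm p :=
    integral_pair_eq_sum P h𝒜 hℬ u v (fun i j => i * j)
  have h4 : (∫ ω, u ω ∂P) = ∑ p ∈ G, p.1 * mm p :=
    integral_pair_eq_sum P h𝒜 hℬ u v (fun i _ => i)
  have h5 : (∫ ω, v ω ∂P) = ∑ p ∈ G, p.2 * mm p :=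
    integral_pair_eq_sum P h𝒜 hℬ u v (fun _ j => j)
  -- abbreviations
  set A2 := ∑ i ∈ S, (i * i) * pu i with hA2
  set B2 := ∑ j ∈ T, (j * j) * pv j with hB2
  set A1 := ∑ i ∈ S, i * pu i with hA1
  set B1 := ∑ j ∈ T, j * pv j with hB1
  -- collapse double sums against mm
  have e1 : ∑ p ∈ G, (p.1 * p.1) * mm p = A2 := by
    rw [hG, Finset.sum_product]
    refine Finset.sum_congr rfl fun i _ => ?_
    rw [← hrow i, Finset.mul_sum]
  have e2 : ∑ p ∈ G, (p.2 * p.2) * mm p = B2 := by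
    rw [hG, Finset.sum_product_right]
    refine Finset.sum_congr rfl fun j _ => ?_
    rw [← hcol j, Finset.mul_sum]
  have e4 : ∑ p ∈ G, p.1 * mm p = A1 := by
    rw [hG, Finset.sum_product]
    refine Finset.sum_congr rfl fun i _ => ?_
    rw [← hrow i, Finset.mul_sum]
  have e5 : ∑ p ∈ G, p.2 * mm p = B1 := by
    rw [hG, Finset.sum_product_right]
    refine Finset.sum_congr rfl fun j _ => ?_
    rw [← hcol j, Finset.mul_sum]
  -- sums against the product measure
  have f1 : ∑ p ∈ G, (p.1 * p.1) * (pu p.1 * pv p.2) = A2 := by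
    rw [hG, Finset.sum_product]
    calc ∑ i ∈ S, ∑ j ∈ T, (i * i) * (pu i * pv j)
        = ∑ i ∈ S, ((i * i) * pu i) * ∑ j ∈ T, pv j := by
          refine Finset.sum_congr rfl fun i _ => ?_
          rw [Finset.mul_sum]
          exact Finset.sum_congr rfl fun j _ => by ring
      _ = A2 := by rw [hT1]; simp [hA2]
  have f2 : ∑ p ∈ G, (p.2 * p.2) * (pu p.1 * pv p.2) = B2 := by
    rw [hG, Finset.sum_product_right]
    calc ∑ j ∈ T, ∑ i ∈ S, (j * j) * (pu i * pv j)
        = ∑ j ∈ T, ((j * j) * pv j) * ∑ i ∈ S, pu i := by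
          refine Finset.sum_congr rfl fun j _ => ?_
          rw [Finset.mul_sum]
          exact Finset.sum_congr rfl fun i _ => by ring
      _ = B2 := by rw [hS1]; simp [hB2]
  have f3 : ∑ p ∈ G, (p.1 * p.2) * (pu p.1 * pv p.2) = A1 * B1 := by
    rw [hG, Finset.sum_product]
    calc ∑ i ∈ S, ∑ j ∈ T, (i * j) * (pu i * pv j)
        = ∑ i ∈ S, (i * pu i) * ∑ j ∈ T, j * pv j := by
          refine Finset.sum_congr rfl fun i _ => ?_
          rw [Finset.mul_sum]
          exact Finset.sum_congr rfl fun j _ => by ring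
      _ = A1 * B1 := by rw [hA1, hB1]; exact (Finset.sum_mul _ _ _).symm
  -- main identity
  have main : ∑ p ∈ G, (p.1 + p.2) ^ 2 * (mm p - c * (pu p.1 * pv p.2))
      = (1 - c) * (A2 + B2) + 2 * ((∑ p ∈ G, (p.1 * p.2) * mm p) - c * A1 * B1) := by
    have expand : ∀ p : ℝ × ℝ, (p.1 + p.2) ^ 2 * (mm p - c * (pu p.1 * pv p.2))
        = ((p.1 * p.1) * mm p + (p.2 * p.2) * mm p + 2 * ((p.1 * p.2) * mm p))
          - (c * ((p.1 * p.1) * (pu p.1 * pv p.2)) + c * ((p.2 * p.2) * (pu p.1 * pv p.2))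
              + c * (2 * ((p.1 * p.2) * (pu p.1 * pv p.2)))) := fun p => by ring
    simp_rw [expand]
    rw [Finset.sum_sub_distrib, Finset.sum_add_distrib, Finset.sum_add_distrib,
      Finset.sum_add_distrib, Finset.sum_add_distrib,
      ← Finset.mul_sum, ← Finset.mul_sum, ← Finset.mul_sum, ← Finset.mul_sum, ← Finset.mul_sum]
    rw [e1, e2, f1, f2, f3]
    ring
  rw [h1, h2, h3, h4, h5, e1, e2, e4, e5, ← main]
  refine Finset.sum_nonneg fun p hp => mul_nonneg (sq_nonneg _) ?_
  exact sub_nonneg.2 (hq p hp)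


lemma integrable_mul_of_memL2 (P : @Measure Ω m) [IsProbabilityMeasure P] {f g : Ω → ℝ}
    (hf : MemLp f 2 P) (hg : MemLp g 2 P) :
    Integrable (fun ω => f ω * g ω) P := by
  refine (L2.integrable_inner (𝕜 := ℝ) (hf.toLp f) (hg.toLp g)).congr ?_
  filter_upwards [hf.coeFn_toLp, hg.coeFn_toLp] with ω h1 h2
  simp [RCLike.inner_apply, h1, h2, mul_comm]

lemma approx {𝒜 : MeasurableSpace Ω} (P : @Measure Ω m) [IsProbabilityMeasure P] (h𝒜 : 𝒜 ≤ m)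
    {u : Ω → ℝ} (hu : Measurable[𝒜] u) (hu2 : MemLp u 2 P) (n : ℕ) :
    ∃ g : @SimpleFunc Ω 𝒜 ℝ, eLpNorm (⇑g - u) 2 P ≤ ENNReal.ofReal (1 / (n + 1))
      ∧ MemLp (⇑g) 2 P := by
  have hsm : StronglyMeasurable[𝒜] u := hu.stronglyMeasurable
  have hu2' : MemLp u 2 (P.trim h𝒜) :=
    ⟨hsm.aestronglyMeasurable, by rw [eLpNorm_trim h𝒜 hsm]; exact hu2.2⟩
  have hε : (ENNReal.ofReal (1 / (n + 1 : ℝ))) ≠ 0 :=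
    ne_of_gt (ENNReal.ofReal_pos.2 (by positivity))
  obtain ⟨g, hg, hgm⟩ := hu2'.exists_simpleFunc_eLpNorm_sub_lt (by norm_num) hε
  refine ⟨g, ?_, memLp_of_memLp_trim h𝒜 hgm⟩
  have hmeas : StronglyMeasurable[𝒜] (⇑g - u) :=
    (@SimpleFunc.stronglyMeasurable Ω ℝ 𝒜 _ g).sub hsm
  have h1 : eLpNorm (⇑g - u) 2 (P.trim h𝒜) = eLpNorm (⇑g - u) 2 P := eLpNorm_trim h𝒜 hmeas
  have h2 : eLpNorm (⇑g - u) 2 (P.trim h𝒜) = eLpNorm (u - ⇑g) 2 (P.trim h𝒜) := by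
    rw [← eLpNorm_neg, neg_sub]
  rw [← h1, h2]
  exact le_of_lt hg

lemma inner_toLp (P : @Measure Ω m) [IsProbabilityMeasure P] {f g : Ω → ℝ}
    (hf : MemLp f 2 P) (hg : MemLp g 2 P) :
    (inner ℝ (hf.toLp f) (hg.toLp g) : ℝ) = ∫ ω, f ω * g ω ∂P := by
  rw [L2.inner_def]
  apply integral_congr_ae
  filter_upwards [hf.coeFn_toLp, hg.coeFn_toLp] with ω h1 h2
  simp [RCLike.inner_apply, h1, h2, mul_comm]

lemma inner_one_toLp (P : @Measure Ω m) [IsProbabilityMeasure P] {f : Ω → ℝ}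
    (hf : MemLp f 2 P) :
    (inner ℝ ((memLp_const (1:ℝ)).toLp (fun _ => (1:ℝ))) (hf.toLp f) : ℝ) = ∫ ω, f ω ∂P := by
  rw [inner_toLp]
  simp

lemma key {𝒜 ℬ : MeasurableSpace Ω} (P : @Measure Ω m) [IsProbabilityMeasure P]
    (h𝒜 : 𝒜 ≤ m) (hℬ : ℬ ≤ m) {c : ℝ}
    (hmix : ∀ A B : Set Ω, MeasurableSet[𝒜] A → MeasurableSet[ℬ] B →
      c * ((P A).toReal * (P B).toReal) ≤ (P (A ∩ B)).toReal)
    {u v : Ω → ℝ} (hu : Measurable[𝒜] u) (hv : Measurable[ℬ] v)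
    (hu2 : MemLp u 2 P) (hv2 : MemLp v 2 P) :
    0 ≤ (1 - c) * ((∫ ω, u ω * u ω ∂P) + ∫ ω, v ω * v ω ∂P)
      + 2 * ((∫ ω, u ω * v ω ∂P) - c * (∫ ω, u ω ∂P) * (∫ ω, v ω ∂P)) := by
  choose un hun hun2 using fun n => approx P h𝒜 hu hu2 n
  choose vn hvn hvn2 using fun n => approx P hℬ hv hv2 n
  set oneL := (memLp_const (1:ℝ) (μ := P)).toLp (fun _ => (1:ℝ)) with honeL
  set U := hu2.toLp u with hU
  set V := hv2.toLp v with hV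
  set Un : ℕ → Lp ℝ 2 P := fun n => (hun2 n).toLp (un n) with hUn
  set Vn : ℕ → Lp ℝ 2 P := fun n => (hvn2 n).toLp (vn n) with hVn
  have htendU : Tendsto Un atTop (𝓝 U) := by
    rw [tendsto_iff_norm_sub_tendsto_zero]
    refine squeeze_zero (fun n => norm_nonneg _) (fun n => ?_)
      tendsto_one_div_add_atTop_nhds_zero_nat
    rw [hUn, hU, ← MemLp.toLp_sub (hun2 n) hu2, Lp.norm_toLp _ _]
    exact ENNReal.toReal_le_of_le_ofReal (by positivity) (hun n)
  have htendV : Tendsto Vn atTop (𝓝 V) := by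
    rw [tendsto_iff_norm_sub_tendsto_zero]
    refine squeeze_zero (fun n => norm_nonneg _) (fun n => ?_)
      tendsto_one_div_add_atTop_nhds_zero_nat
    rw [hVn, hV, ← MemLp.toLp_sub (hvn2 n) hv2, Lp.norm_toLp _ _]
    exact ENNReal.toReal_le_of_le_ofReal (by positivity) (hvn n)
  have hE : Tendsto (fun n => (1 - c) * ((inner ℝ (Un n) (Un n) : ℝ) + (inner ℝ (Vn n) (Vn n) : ℝ))
      + 2 * ((inner ℝ (Un n) (Vn n) : ℝ)
        - c * (inner ℝ oneL (Un n) : ℝ) * (inner ℝ oneL (Vn n) : ℝ)))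
      atTop (𝓝 ((1 - c) * ((inner ℝ U U : ℝ) + (inner ℝ V V : ℝ))
      + 2 * ((inner ℝ U V : ℝ) - c * (inner ℝ oneL U : ℝ) * (inner ℝ oneL V : ℝ)))) := by
    exact ((tendsto_const_nhds.mul ((htendU.inner htendU).add (htendV.inner htendV))).add
      (tendsto_const_nhds.mul ((htendU.inner htendV).sub
        ((tendsto_const_nhds.mul (tendsto_const_nhds.inner htendU)).mul
          (tendsto_const_nhds.inner htendV)))))
  have hnonneg : ∀ n, 0 ≤ (1 - c) * ((inner ℝ (Un n) (Un n) : ℝ) + (inner ℝ (Vn n) (Vn n) : ℝ))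
      + 2 * ((inner ℝ (Un n) (Vn n) : ℝ)
        - c * (inner ℝ oneL (Un n) : ℝ) * (inner ℝ oneL (Vn n) : ℝ)) := by
    intro n
    rw [hUn, hVn]
    rw [inner_toLp P (hun2 n) (hun2 n), inner_toLp P (hvn2 n) (hvn2 n),
      inner_toLp P (hun2 n) (hvn2 n), honeL, inner_one_toLp P (hun2 n), inner_one_toLp P (hvn2 n)]
    exact key_simple P h𝒜 hℬ hmix (un n) (vn n)
  have hlim := ge_of_tendsto' hE hnonneg
  rw [hU, hV, inner_toLp P hu2 hu2, inner_toLp P hv2 hv2, inner_toLp P hu2 hv2, honeL,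
    inner_one_toLp P hu2, inner_one_toLp P hv2] at hlim
  exact hlim

end Aux

/-- Bradley's lemma: the maximal correlation coefficient between two sub-σ-algebras
is bounded by `1 - ψ'`, where `ψ'` is the lower ψ-mixing coefficient. -/
theorem rho_le_one_sub_psi_prime
    {Ω : Type*} {m : MeasurableSpace Ω} (P : Measure Ω) [IsProbabilityMeasure P]
    (𝒜 ℬ : MeasurableSpace Ω) (h𝒜 : 𝒜 ≤ m) (hℬ : ℬ ≤ m) :
    sSup {r : ℝ | ∃ X Y : Ω → ℝ,
        Measurable[𝒜] X ∧ Measurable[ℬ] Y ∧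
        MemLp X 2 P ∧ MemLp Y 2 P ∧
        eLpNorm (fun ω => X ω - ∫ ω', X ω' ∂P) 2 P ≠ 0 ∧
        eLpNorm (fun ω => Y ω - ∫ ω', Y ω' ∂P) 2 P ≠ 0 ∧
        r = |((∫ ω, X ω * Y ω ∂P) - (∫ ω, X ω ∂P) * (∫ ω, Y ω ∂P)) /
          ((eLpNorm (fun ω => X ω - ∫ ω', X ω' ∂P) 2 P).toReal *
            (eLpNorm (fun ω => Y ω - ∫ ω', Y ω' ∂P) 2 P).toReal)|}
      ≤ 1 - sInf {r : ℝ | ∃ A B : Set Ω,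
        MeasurableSet[𝒜] A ∧ MeasurableSet[ℬ] B ∧
        0 < (P A).toReal * (P B).toReal ∧
        r = (P (A ∩ B)).toReal / ((P A).toReal * (P B).toReal)} := by
  classical
  set Sψ := {r : ℝ | ∃ A B : Set Ω,
        MeasurableSet[𝒜] A ∧ MeasurableSet[ℬ] B ∧
        0 < (P A).toReal * (P B).toReal ∧
        r = (P (A ∩ B)).toReal / ((P A).toReal * (P B).toReal)} with hSψ
  set c := sInf Sψ with hc
  have hbdd : BddBelow Sψ := by
    refine ⟨0, ?_⟩
    rintro r ⟨A, B, hA, hB, hpos, rfl⟩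
    positivity
  have hmemS : (1 : ℝ) ∈ Sψ := by
    refine ⟨Set.univ, Set.univ, MeasurableSet.univ, MeasurableSet.univ, by simp, by simp⟩
  have hc1 : c ≤ 1 := csInf_le hbdd hmemS
  have hc0 : 0 ≤ c := Real.sInf_nonneg (by rintro r ⟨A, B, hA, hB, hpos, rfl⟩; positivity)
  have hmix : ∀ A B : Set Ω, MeasurableSet[𝒜] A → MeasurableSet[ℬ] B →
      c * ((P A).toReal * (P B).toReal) ≤ (P (A ∩ B)).toReal := by
    intro A B hA hB
    rcases eq_or_lt_of_le (show (0:ℝ) ≤ (P A).toReal * (P B).toReal by positivity) with h | h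
    · rw [← h, mul_zero]
      exact ENNReal.toReal_nonneg
    · have hcle : c ≤ (P (A ∩ B)).toReal / ((P A).toReal * (P B).toReal) :=
        csInf_le hbdd ⟨A, B, hA, hB, h, rfl⟩
      calc c * ((P A).toReal * (P B).toReal)
          ≤ ((P (A ∩ B)).toReal / ((P A).toReal * (P B).toReal))
            * ((P A).toReal * (P B).toReal) :=
            mul_le_mul_of_nonneg_right hcle h.le
        _ = (P (A ∩ B)).toReal := div_mul_cancel₀ _ (ne_of_gt h)
  refine Real.sSup_le ?_ (by linarith)
  rintro r ⟨X, Y, hX, hY, hX2, hY2, hXσ, hYσ, rfl⟩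
  set a := ∫ ω', X ω' ∂P with ha
  set b := ∫ ω', Y ω' ∂P with hb
  set u : Ω → ℝ := fun ω => X ω - a with hu_def
  set v : Ω → ℝ := fun ω => Y ω - b with hv_def
  have hu : Measurable[𝒜] u := hX.sub measurable_const
  have hv : Measurable[ℬ] v := hY.sub measurable_const
  have hu2 : MemLp u 2 P := hX2.sub (memLp_const a)
  have hv2 : MemLp v 2 P := hY2.sub (memLp_const b)
  set σX := (eLpNorm u 2 P).toReal with hσX_def
  set σY := (eLpNorm v 2 P).toReal with hσY_def
  have hσX : 0 < σX := ENNReal.toReal_pos hXσ hu2.2.ne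
  have hσY : 0 < σY := ENNReal.toReal_pos hYσ hv2.2.ne
  have hXi : Integrable X P := hX2.integrable one_le_two
  have hYi : Integrable Y P := hY2.integrable one_le_two
  have hXY : Integrable (fun ω => X ω * Y ω) P := integrable_mul_of_memL2 P hX2 hY2
  have hmean_u : ∫ ω, u ω ∂P = 0 := by
    rw [hu_def]
    rw [integral_sub hXi (integrable_const a), integral_const]
    simp [measure_univ, ha]
  have hmean_v : ∫ ω, v ω ∂P = 0 := by
    rw [hv_def]
    rw [integral_sub hYi (integrable_const b), integral_const]
    simp [measure_univ, hb]
  have hcov : (∫ ω, X ω * Y ω ∂P) - a * b = ∫ ω, u ω * v ω ∂P := by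
    rw [hu_def, hv_def]
    rw [show (fun ω => (X ω - a) * (Y ω - b))
        = fun ω => X ω * Y ω - b * X ω - (a * Y ω - a * b) from funext fun ω => by ring]
    have i3 : Integrable (fun ω => b * X ω) P := hXi.const_mul b
    have i4 : Integrable (fun ω => a * Y ω) P := hYi.const_mul a
    have i1 : Integrable (fun ω => X ω * Y ω - b * X ω) P := hXY.sub i3
    have i2 : Integrable (fun ω => a * Y ω - a * b) P := i4.sub (integrable_const _)
    rw [integral_sub i1 i2, integral_sub hXY i3, integral_sub i4 (integrable_const (a * b)),
      integral_const_mul, integral_const_mul, integral_const]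
    simp only [probReal_univ, one_smul]
    ring
  have hnormu : ∫ ω, u ω * u ω ∂P = σX ^ 2 := by
    rw [← inner_toLp P hu2 hu2, real_inner_self_eq_norm_sq, Lp.norm_toLp]
  have hnormv : ∫ ω, v ω * v ω ∂P = σY ^ 2 := by
    rw [← inner_toLp P hv2 hv2, real_inner_self_eq_norm_sq, Lp.norm_toLp]
  have hAB : ∀ t : ℝ, 0 ≤ ((1 - c) * σY ^ 2) * (t * t) + (2 * ∫ ω, u ω * v ω ∂P) * t
      + (1 - c) * σX ^ 2 := by
    intro t
    have hk := key P h𝒜 hℬ hmix hu (hv.const_mul t) hu2 (hv2.const_mul t)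
    have h1 : ∫ ω, (t * v ω) * (t * v ω) ∂P = (t * t) * ∫ ω, v ω * v ω ∂P := by
      rw [← integral_const_mul]
      exact integral_congr_ae (Filter.Eventually.of_forall fun ω => by ring)
    have h2 : ∫ ω, u ω * (t * v ω) ∂P = t * ∫ ω, u ω * v ω ∂P := by
      rw [← integral_const_mul]
      exact integral_congr_ae (Filter.Eventually.of_forall fun ω => by ring)
    have h3 : ∫ ω, t * v ω ∂P = 0 := by
      rw [integral_const_mul, hmean_v, mul_zero]
    rw [h1, h2, h3, hmean_u, hnormu, hnormv] at hk
    refine le_of_le_of_eq hk (by ring)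
  have hdisc := discrim_le_zero hAB
  rw [discrim] at hdisc
  have hC2 : (∫ ω, u ω * v ω ∂P) ^ 2 ≤ ((1 - c) * (σX * σY)) ^ 2 := by nlinarith [hdisc]
  have hpos : (0:ℝ) ≤ (1 - c) * (σX * σY) :=
    mul_nonneg (by linarith) (by positivity)
  have habs : |∫ ω, u ω * v ω ∂P| ≤ (1 - c) * (σX * σY) := by
    calc |∫ ω, u ω * v ω ∂P| = Real.sqrt ((∫ ω, u ω * v ω ∂P) ^ 2) :=
          (Real.sqrt_sq_eq_abs _).symm
      _ ≤ Real.sqrt (((1 - c) * (σX * σY)) ^ 2) := Real.sqrt_le_sqrt hC2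
      _ = (1 - c) * (σX * σY) := Real.sqrt_sq hpos
  have hσpos : 0 < σX * σY := mul_pos hσX hσY
  calc |((∫ ω, X ω * Y ω ∂P) - a * b) / (σX * σY)|
      = |∫ ω, u ω * v ω ∂P| / (σX * σY) := by rw [hcov, abs_div, abs_of_pos hσpos]
    _ ≤ ((1 - c) * (σX * σY)) / (σX * σY) := (div_le_div_iff_of_pos_right hσpos).2 habs
    _ = 1 - c := by field_simp
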